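/- Let (Y_n) be the modified Galton–Watson process with pgfs g_n(x) = ((n-(n-1)x)/(n+1-nx))^2 started from the critical geometric offspring law. Then for all i, j ≥ 1, E(Y_i | Y_j = 0) ≤ 2 and E(Y_i | Y_j > 0) ≤ 4i + 4. -/

import Mathlib

open MeasureTheory ProbabilityTheory
open scoped ENNReal

/-- First-generation law of the modified Galton–Watson process:
`P(Y_1 = i) = (i+1) 2^{-i-2}` (the size-biased-minus-one critical geometric law). -/
noncomputable def gwFirstLaw (i : ℕ) : ℝ≥0∞ := (i + 1) * (2 : ℝ≥0∞)⁻¹ ^ (i + 2)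

/-- Transition probabilities of the Galton–Watson chain with critical geometric
offspring law `π_i = 2^{-i-1}`: from `k` individuals, the next generation is the sum of
`k` i.i.d. geometric variables, giving a negative binomial law
`p(k, m) = C(m+k-1, m) 2^{-(m+k)}`. -/
noncomputable def gwStep (k m : ℕ) : ℝ≥0∞ :=
  (Nat.choose (m + k - 1) m) * (2 : ℝ≥0∞)⁻¹ ^ (m + k)

/-! ### Elementary `ℝ≥0∞` arithmetic helpers -/

lemma nat_div_mul (a b c d : ℕ) :
    ((a:ℝ≥0∞)/b) * ((c:ℝ≥0∞)/d) = ((a*c : ℕ):ℝ≥0∞)/((b*d : ℕ)) := by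
  push_cast
  rw [div_eq_mul_inv, div_eq_mul_inv, div_eq_mul_inv,
    ENNReal.mul_inv (Or.inr (ENNReal.natCast_ne_top d)) (Or.inl (ENNReal.natCast_ne_top b))]
  ring

lemma nat_div_cancel (a b k : ℕ) (hk : k ≠ 0) :
    ((k*a : ℕ):ℝ≥0∞)/((k*b : ℕ)) = (a:ℝ≥0∞)/b := by
  push_cast
  exact ENNReal.mul_div_mul_left _ _ (by exact_mod_cast hk) (ENNReal.natCast_ne_top k)

lemma nat_div_pow (a b e : ℕ) : ((a:ℝ≥0∞)/b)^e = ((a^e : ℕ):ℝ≥0∞)/((b^e:ℕ)) := by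
  push_cast
  rw [div_eq_mul_inv, mul_pow, ← ENNReal.inv_pow, div_eq_mul_inv]

lemma nat_mul_div (c A B : ℕ) :
    (c:ℝ≥0∞) * ((A:ℝ≥0∞)/B) = ((c*A:ℕ):ℝ≥0∞)/(B:ℕ) := by
  calc (c:ℝ≥0∞) * ((A:ℝ≥0∞)/B)
      = ((c:ℕ):ℝ≥0∞)/((1:ℕ):ℝ≥0∞) * ((A:ℝ≥0∞)/B) := by norm_num
    _ = ((c*A:ℕ):ℝ≥0∞)/((1*B:ℕ):ℝ≥0∞) := nat_div_mul _ _ _ _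
    _ = _ := by rw [one_mul]

/-! ### The negative binomial series in `ℝ≥0∞` -/

lemma ennreal_cauchy (f g : ℕ → ℝ≥0∞) :
    ∑' m, ∑ p ∈ Finset.HasAntidiagonal.antidiagonal m, f p.1 * g p.2 = (∑' a, f a) * (∑' b, g b) := by
  have h1 : ∀ m : ℕ, ∑ p ∈ Finset.HasAntidiagonal.antidiagonal m, f p.1 * g p.2
      = ∑' p : (Finset.HasAntidiagonal.antidiagonal m : Finset (ℕ × ℕ)), f (p : ℕ × ℕ).1 * g (p : ℕ × ℕ).2 :=
    fun m => (Finset.tsum_subtype _ _).symm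
  calc ∑' m, ∑ p ∈ Finset.HasAntidiagonal.antidiagonal m, f p.1 * g p.2
      = ∑' (m : ℕ) (p : (Finset.HasAntidiagonal.antidiagonal m : Finset (ℕ × ℕ))), f (p:ℕ×ℕ).1 * g (p:ℕ×ℕ).2 := by
        exact tsum_congr h1
    _ = ∑' (q : Σ m : ℕ, (Finset.HasAntidiagonal.antidiagonal m : Finset (ℕ × ℕ))),
          f ((q.2 : ℕ×ℕ)).1 * g ((q.2 : ℕ×ℕ)).2 := (ENNReal.tsum_sigma _).symm
    _ = ∑' (p : ℕ × ℕ), f p.1 * g p.2 := by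
        exact Finset.HasAntidiagonal.sigmaAntidiagonalEquivProd.tsum_eq (fun p : ℕ × ℕ => f p.1 * g p.2)
    _ = (∑' a, f a) * (∑' b, g b) := by
        rw [ENNReal.tsum_prod']
        simp_rw [ENNReal.tsum_mul_left, ENNReal.tsum_mul_right]

lemma choose_sum (k m : ℕ) :
    ∑ a ∈ Finset.range (m+1), Nat.choose (a+k-1) a = Nat.choose (m+k) m := by
  induction m with
  | zero => simp
  | succ m ih =>
      rw [Finset.sum_range_succ, ih]
      have h1 : (m+1)+k-1 = m+k := by omega
      rw [h1, ← Nat.choose_succ_succ']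
      congr 1; omega

lemma negbin (k : ℕ) (x : ℝ≥0∞) :
    ∑' m : ℕ, (Nat.choose (m+k-1) m : ℝ≥0∞) * x^m = ((1-x)⁻¹)^k := by
  induction k with
  | zero =>
      rw [pow_zero]
      rw [tsum_eq_single 0 (by intro m hm; simp [Nat.choose_eq_zero_of_lt (by omega : m - 1 < m)])]
      simp
  | succ k ih =>
      have key : ∀ m : ℕ, (Nat.choose (m+(k+1)-1) m : ℝ≥0∞) * x^m
          = ∑ p ∈ Finset.HasAntidiagonal.antidiagonal m, ((Nat.choose (p.1+k-1) p.1 : ℝ≥0∞) * x^p.1) * x^p.2 := by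
        intro m
        have h1 : m+(k+1)-1 = m+k := by omega
        rw [h1, ← choose_sum k m]
        rw [Finset.Nat.sum_antidiagonal_eq_sum_range_succ_mk]
        push_cast
        rw [Finset.sum_mul]
        refine Finset.sum_congr rfl fun a ha => ?_
        rw [Finset.mem_range] at ha
        rw [mul_assoc, ← pow_add]
        congr 2
        omega
      calc ∑' m : ℕ, (Nat.choose (m+(k+1)-1) m : ℝ≥0∞) * x^m
          = ∑' m, ∑ p ∈ Finset.HasAntidiagonal.antidiagonal m, ((Nat.choose (p.1+k-1) p.1 : ℝ≥0∞) * x^p.1) * x^p.2 :=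
            tsum_congr key
        _ = (∑' a, (Nat.choose (a+k-1) a : ℝ≥0∞) * x^a) * (∑' b, x^b) :=
            ennreal_cauchy (fun a => (Nat.choose (a+k-1) a : ℝ≥0∞) * x^a) (fun b => x^b)
        _ = ((1-x)⁻¹)^(k+1) := by rw [ih, ENNReal.tsum_geometric, pow_succ]

/-! ### One-step transforms of the relevant weight functions -/

noncomputable def wfun (t m : ℕ) : ℝ≥0∞ := (((t:ℕ):ℝ≥0∞)/((t+1 : ℕ):ℝ≥0∞))^m

lemma half_eq : (2:ℝ≥0∞)⁻¹ = ((1:ℕ):ℝ≥0∞)/((2:ℕ):ℝ≥0∞) := by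
  simp [ENNReal.div_eq_inv_mul]

lemma xval (t : ℕ) : (2:ℝ≥0∞)⁻¹ * (((t:ℕ):ℝ≥0∞)/((t+1 : ℕ):ℝ≥0∞))
    = ((t:ℕ):ℝ≥0∞)/((2*t+2 : ℕ):ℝ≥0∞) := by
  rw [half_eq, nat_div_mul, show 1*t = t from by omega, show 2*(t+1) = 2*t+2 from by omega]

lemma one_sub_xval (t : ℕ) :
    (1:ℝ≥0∞) - ((t:ℕ):ℝ≥0∞)/((2*t+2 : ℕ):ℝ≥0∞) = ((t+2:ℕ):ℝ≥0∞)/((2*t+2 : ℕ):ℝ≥0∞) := by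
  have hden0 : ((2*t+2:ℕ):ℝ≥0∞) ≠ 0 := by exact_mod_cast (by omega : (2*t+2:ℕ) ≠ 0)
  have hb : ((t:ℕ):ℝ≥0∞)/((2*t+2:ℕ):ℝ≥0∞) ≠ ⊤ :=
    (ENNReal.div_lt_top (ENNReal.natCast_ne_top _) hden0).ne
  refine ENNReal.sub_eq_of_eq_add hb ?_
  rw [ENNReal.div_add_div_same,
    show ((t+2:ℕ):ℝ≥0∞) + ((t:ℕ):ℝ≥0∞) = ((2*t+2:ℕ):ℝ≥0∞) from by push_cast; ring,
    ENNReal.div_self hden0 (ENNReal.natCast_ne_top _)]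

lemma half_geom (t : ℕ) :
    (2:ℝ≥0∞)⁻¹ * ((1:ℝ≥0∞) - ((t:ℕ):ℝ≥0∞)/((2*t+2 : ℕ):ℝ≥0∞))⁻¹
      = ((t+1:ℕ):ℝ≥0∞)/((t+2:ℕ):ℝ≥0∞) := by
  rw [one_sub_xval, ENNReal.inv_div (Or.inl (ENNReal.natCast_ne_top _))
    (Or.inl (by exact_mod_cast (by omega : (2*t+2:ℕ) ≠ 0))), half_eq, nat_div_mul,
    show 1*(2*t+2) = 2*(t+1) from by ring, show (2:ℕ)*(t+2) = 2*(t+2) from rfl]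
  exact nat_div_cancel (t+1) (t+2) 2 (by omega)

lemma D2 (k t : ℕ) : ∑' m, gwStep k m * wfun t m = wfun (t+1) k := by
  have key : ∀ m, gwStep k m * wfun t m
      = (2:ℝ≥0∞)⁻¹^k * ((Nat.choose (m+k-1) m : ℝ≥0∞)
          * (((t:ℕ):ℝ≥0∞)/((2*t+2 : ℕ):ℝ≥0∞))^m) := by
    intro m
    unfold gwStep wfun
    rw [← xval t, mul_pow, pow_add]
    ring
  rw [tsum_congr key, ENNReal.tsum_mul_left, negbin, ← mul_pow, half_geom]
  unfold wfun
  rw [show t+1+1 = t+2 from by omega]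

lemma choose_shift (k m : ℕ) :
    ((m+1 : ℕ):ℝ≥0∞) * (Nat.choose (m+k) (m+1) : ℝ≥0∞)
      = (k:ℝ≥0∞) * (Nat.choose (m+k) m : ℝ≥0∞) := by
  have hnat : (m+1) * Nat.choose (m+k) (m+1) = k * Nat.choose (m+k) m := by
    have h := Nat.choose_succ_right_eq (m+k) m
    rw [show m+k-m = k from by omega] at h
    rw [mul_comm, h, mul_comm]
  exact_mod_cast hnat

lemma D3 (k : ℕ) : ∑' m, gwStep k m * (m:ℝ≥0∞) = (k:ℝ≥0∞) := by
  rw [tsum_eq_zero_add' ENNReal.summable]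
  have h0 : gwStep k 0 * ((0:ℕ):ℝ≥0∞) = 0 := by simp
  rw [h0, zero_add]
  have key : ∀ m, gwStep k (m+1) * ((m+1 : ℕ):ℝ≥0∞)
      = (k:ℝ≥0∞) * (2:ℝ≥0∞)⁻¹^(k+1) * ((Nat.choose (m+(k+1)-1) m : ℝ≥0∞) * (2:ℝ≥0∞)⁻¹^m) := by
    intro m
    unfold gwStep
    rw [show m+1+k-1 = m+k from by omega, show m+(k+1)-1 = m+k from by omega,
      show m+1+k = m+(k+1) from by omega, pow_add]
    calc (Nat.choose (m+k) (m+1) : ℝ≥0∞) * ((2:ℝ≥0∞)⁻¹^m * (2:ℝ≥0∞)⁻¹^(k+1)) * ((m+1:ℕ):ℝ≥0∞)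
        = (((m+1 : ℕ):ℝ≥0∞) * (Nat.choose (m+k) (m+1) : ℝ≥0∞))
            * ((2:ℝ≥0∞)⁻¹^m * (2:ℝ≥0∞)⁻¹^(k+1)) := by ring
      _ = ((k:ℝ≥0∞) * (Nat.choose (m+k) m : ℝ≥0∞))
            * ((2:ℝ≥0∞)⁻¹^m * (2:ℝ≥0∞)⁻¹^(k+1)) := by rw [choose_shift]
      _ = (k:ℝ≥0∞) * (2:ℝ≥0∞)⁻¹^(k+1) * ((Nat.choose (m+k) m : ℝ≥0∞) * (2:ℝ≥0∞)⁻¹^m) := by ring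
  rw [tsum_congr key, ENNReal.tsum_mul_left, negbin]
  have hs : (1:ℝ≥0∞) - 2⁻¹ = 2⁻¹ := by
    rw [ENNReal.sub_eq_of_eq_add (by simp)]; rw [ENNReal.inv_two_add_inv_two]
  rw [hs, inv_inv, mul_assoc, ← mul_pow,
    ENNReal.inv_mul_cancel two_ne_zero ENNReal.ofNat_ne_top, one_pow, mul_one]

lemma D4 (k t : ℕ) : ∑' m, gwStep k m * ((m:ℝ≥0∞) * wfun t m)
    = (((t:ℕ):ℝ≥0∞)/((t+2:ℕ):ℝ≥0∞)) * ((k:ℝ≥0∞) * wfun (t+1) k) := by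
  rw [tsum_eq_zero_add' ENNReal.summable]
  have h0 : gwStep k 0 * (((0:ℕ):ℝ≥0∞) * wfun t 0) = 0 := by simp
  rw [h0, zero_add]
  set d : ℝ≥0∞ := ((t:ℕ):ℝ≥0∞)/((t+1 : ℕ):ℝ≥0∞) with hd
  have key : ∀ m, gwStep k (m+1) * (((m+1:ℕ):ℝ≥0∞) * wfun t (m+1))
      = (k:ℝ≥0∞) * d * (2:ℝ≥0∞)⁻¹^(k+1)
          * ((Nat.choose (m+(k+1)-1) m : ℝ≥0∞) * (((t:ℕ):ℝ≥0∞)/((2*t+2 : ℕ):ℝ≥0∞))^m) := by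
    intro m
    unfold gwStep wfun
    rw [show m+1+k-1 = m+k from by omega, show m+(k+1)-1 = m+k from by omega,
      show m+1+k = m+(k+1) from by omega, pow_add, ← xval t, mul_pow]
    rw [← hd]
    calc (Nat.choose (m+k) (m+1) : ℝ≥0∞) * ((2:ℝ≥0∞)⁻¹^m * (2:ℝ≥0∞)⁻¹^(k+1))
          * (((m+1:ℕ):ℝ≥0∞) * d^(m+1))
        = (((m+1 : ℕ):ℝ≥0∞) * (Nat.choose (m+k) (m+1) : ℝ≥0∞))
            * ((2:ℝ≥0∞)⁻¹^m * (2:ℝ≥0∞)⁻¹^(k+1) * d^(m+1)) := by ring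
      _ = ((k:ℝ≥0∞) * (Nat.choose (m+k) m : ℝ≥0∞))
            * ((2:ℝ≥0∞)⁻¹^m * (2:ℝ≥0∞)⁻¹^(k+1) * d^(m+1)) := by rw [choose_shift]
      _ = (k:ℝ≥0∞) * d * (2:ℝ≥0∞)⁻¹^(k+1)
            * ((Nat.choose (m+k) m : ℝ≥0∞) * ((2:ℝ≥0∞)⁻¹^m * d^m)) := by ring
  rw [tsum_congr key, ENNReal.tsum_mul_left, negbin, mul_assoc, ← mul_pow, half_geom]
  unfold wfun
  rw [show t+1+1 = t+2 from by omega]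
  have hcancel : d * (((t+1:ℕ):ℝ≥0∞)/((t+2:ℕ):ℝ≥0∞))
      = ((t:ℕ):ℝ≥0∞)/((t+2:ℕ):ℝ≥0∞) := by
    rw [hd, nat_div_mul, show t*(t+1) = (t+1)*t from by ring,
      show (t+1)*(t+2) = (t+1)*(t+2) from rfl]
    exact nat_div_cancel t (t+2) (t+1) (by omega)
  rw [pow_succ]
  calc (k:ℝ≥0∞) * d * ((((t+1:ℕ):ℝ≥0∞)/((t+2:ℕ):ℝ≥0∞))^k * (((t+1:ℕ):ℝ≥0∞)/((t+2:ℕ):ℝ≥0∞)))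
      = (d * (((t+1:ℕ):ℝ≥0∞)/((t+2:ℕ):ℝ≥0∞)))
          * ((k:ℝ≥0∞) * (((t+1:ℕ):ℝ≥0∞)/((t+2:ℕ):ℝ≥0∞))^k) := by ring
    _ = (((t:ℕ):ℝ≥0∞)/((t+2:ℕ):ℝ≥0∞)) * ((k:ℝ≥0∞) * (((t+1:ℕ):ℝ≥0∞)/((t+2:ℕ):ℝ≥0∞))^k) := by
        rw [hcancel]

lemma gwFirstLaw_eq (m : ℕ) : gwFirstLaw m = gwStep 2 m := by
  unfold gwFirstLaw gwStep
  rw [show m+2-1 = m+1 from by omega, Nat.choose_succ_self_right]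
  push_cast
  ring

/-! ### Cylinder decomposition of the path space -/

def padF (n : ℕ) (v : Fin n → ℕ) : ℕ → ℕ :=
  fun t => if h : 1 ≤ t ∧ t ≤ n then v ⟨t - 1, by omega⟩ else 0

lemma padF_pos (n : ℕ) (v : Fin n → ℕ) (t : ℕ) (h1 : 1 ≤ t) (h2 : t ≤ n) :
    padF n v t = v ⟨t-1, by omega⟩ := dif_pos ⟨h1, h2⟩

lemma padF_apply (n : ℕ) (v : Fin n → ℕ) (q : Fin n) : padF n v ((q:ℕ)+1) = v q := by
  have hq := q.isLt
  rw [padF_pos n v _ (by omega) (by omega)]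
  exact congrArg v (Fin.ext (by simp))

def snocEquiv (n : ℕ) : ((Fin n → ℕ) × ℕ) ≃ (Fin (n+1) → ℕ) where
  toFun uz := Fin.snoc uz.1 uz.2
  invFun z := (Fin.init z, z (Fin.last n))
  left_inv := by rintro ⟨u, m⟩; simp [Fin.init_snoc, Fin.snoc_last]
  right_inv := by intro z; simp [Fin.snoc_init_self]

lemma padF_snoc_low (n : ℕ) (u : Fin n → ℕ) (m t : ℕ) (h1 : 1 ≤ t) (h2 : t ≤ n) :
    padF (n+1) (Fin.snoc u m : Fin (n+1) → ℕ) t = padF n u t := by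
  rw [padF_pos (n+1) _ t h1 (by omega), padF_pos n u t h1 h2]
  have : (⟨t-1, by omega⟩ : Fin (n+1)) = Fin.castSucc ⟨t-1, by omega⟩ := rfl
  rw [this, Fin.snoc_castSucc]

lemma padF_snoc_top (n : ℕ) (u : Fin n → ℕ) (m : ℕ) :
    padF (n+1) (Fin.snoc u m : Fin (n+1) → ℕ) (n+1) = m := by
  rw [padF_pos (n+1) _ (n+1) (by omega) le_rfl]
  have : (⟨n+1-1, by omega⟩ : Fin (n+1)) = Fin.last n := Fin.ext (by simp)
  rw [this, Fin.snoc_last]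

section Core
variable {Ω : Type*} [MeasurableSpace Ω] (μ : Measure Ω) (Y : ℕ → Ω → ℕ)

lemma ml1 (hmeas : ∀ n, Measurable (Y n)) (n : ℕ) (g : (ℕ → ℕ) → ℝ≥0∞)
    (hg : ∀ f f' : ℕ → ℕ, (∀ t, 1 ≤ t → t ≤ n → f t = f' t) → g f = g f') :
    ∫⁻ ω, g (fun t => Y t ω) ∂μ
      = ∑' v : Fin n → ℕ, g (padF n v) * μ {ω | ∀ t ∈ Finset.Icc 1 n, Y t ω = padF n v t} := by
  set S : (Fin n → ℕ) → Set Ω :=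
    fun v => {ω | ∀ t ∈ Finset.Icc 1 n, Y t ω = padF n v t} with hS
  have hSm : ∀ v, MeasurableSet (S v) := by
    intro v
    have : S v = ⋂ t ∈ Finset.Icc 1 n, Y t ⁻¹' {padF n v t} := by
      ext ω; simp [hS, Set.mem_iInter]
    rw [this]
    exact MeasurableSet.biInter (Finset.Icc 1 n).countable_toSet
      (fun t _ => (hmeas t) (measurableSet_singleton _))
  have hdisj : Pairwise (Function.onFun Disjoint S) := by
    intro v v' hne
    rw [Function.onFun, Set.disjoint_left]
    intro ω h1 h2
    apply hne
    funext q
    have hq := q.isLt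
    have ht : (q:ℕ)+1 ∈ Finset.Icc 1 n := by
      rw [Finset.mem_Icc]; omega
    have e1 := h1 _ ht
    have e2 := h2 _ ht
    rw [padF_apply] at e1 e2
    rw [← e1, ← e2]
  have hcover : (⋃ v, S v) = Set.univ := by
    ext ω
    simp only [Set.mem_iUnion, Set.mem_univ, iff_true]
    refine ⟨fun q => Y ((q:ℕ)+1) ω, ?_⟩
    intro t ht
    rw [Finset.mem_Icc] at ht
    rw [padF_pos n _ t ht.1 ht.2]
    show Y t ω = Y ((t-1)+1) ω
    rw [show t-1+1 = t from by omega]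
  conv_lhs => rw [← setLIntegral_univ, ← hcover]
  rw [lintegral_iUnion hSm hdisj]
  refine tsum_congr fun v => ?_
  rw [setLIntegral_congr_fun (hSm v)
    ((fun ω hω => hg (fun t => Y t ω) (padF n v)
      (fun t h1 h2 => hω t (Finset.mem_Icc.mpr ⟨h1, h2⟩)) : ∀ ω ∈ S v,
        g (fun t => Y t ω) = g (padF n v)))]
  exact setLIntegral_const _ _

variable (hmeas : ∀ n, Measurable (Y n))
    (hjoint : ∀ n : ℕ, ∀ k : ℕ → ℕ,
      μ {ω | ∀ t ∈ Finset.Icc 1 (n + 1), Y t ω = k t} =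
        gwFirstLaw (k 1) * ∏ t ∈ Finset.Icc 1 n, gwStep (k t) (k (t + 1)))

include hmeas hjoint

lemma stepB (i n : ℕ) (hi : 1 ≤ i) (hin : i ≤ n) (v w : ℕ → ℝ≥0∞) :
    ∫⁻ ω, v (Y i ω) * w (Y (n+1) ω) ∂μ
      = ∫⁻ ω, v (Y i ω) * (∑' m, gwStep (Y n ω) m * w m) ∂μ := by
  obtain ⟨p, rfl⟩ : ∃ p, n = p + 1 := ⟨n-1, by omega⟩
  rw [show (fun ω => v (Y i ω) * w (Y (p+1+1) ω))
      = fun ω => (fun f : ℕ → ℕ => v (f i) * w (f (p+2))) (fun t => Y t ω) from rfl]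
  rw [ml1 μ Y hmeas (p+2) (fun f => v (f i) * w (f (p+2)))
    (fun f f' h => by rw [h i hi (by omega), h (p+2) (by omega) le_rfl])]
  rw [show (fun ω => v (Y i ω) * (∑' m, gwStep (Y (p+1) ω) m * w m))
      = fun ω => (fun f : ℕ → ℕ => v (f i) * (∑' m, gwStep (f (p+1)) m * w m))
          (fun t => Y t ω) from rfl]
  rw [ml1 μ Y hmeas (p+1) (fun f => v (f i) * (∑' m, gwStep (f (p+1)) m * w m))
    (fun f f' h => by rw [h i hi hin, h (p+1) (by omega) le_rfl])]
  rw [← (snocEquiv (p+1)).tsum_eq]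
  rw [ENNReal.tsum_prod']
  refine tsum_congr fun u => ?_
  have hPadLow : ∀ m t, 1 ≤ t → t ≤ p+1 →
      padF (p+2) (snocEquiv (p+1) (u, m)) t = padF (p+1) u t := by
    intro m t h1 h2
    exact padF_snoc_low (p+1) u m t h1 h2
  have hPadTop : ∀ m, padF (p+2) (snocEquiv (p+1) (u, m)) (p+2) = m := by
    intro m
    exact padF_snoc_top (p+1) u m
  calc ∑' m, v (padF (p+2) (snocEquiv (p+1) (u, m)) i)
        * w (padF (p+2) (snocEquiv (p+1) (u, m)) (p+2))
        * μ {ω | ∀ t ∈ Finset.Icc 1 (p+2), Y t ω = padF (p+2) (snocEquiv (p+1) (u, m)) t}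
      = ∑' m, (v (padF (p+1) u i)
          * (gwFirstLaw (padF (p+1) u 1)
            * ∏ t ∈ Finset.Icc 1 p, gwStep (padF (p+1) u t) (padF (p+1) u (t+1))))
          * (gwStep (padF (p+1) u (p+1)) m * w m) := by
        refine tsum_congr fun m => ?_
        rw [hjoint (p+1) (padF (p+2) (snocEquiv (p+1) (u, m)))]
        rw [Finset.prod_Icc_succ_top (by omega : 1 ≤ p+1)]
        rw [hPadLow m i hi hin, hPadTop m, hPadLow m 1 le_rfl (by omega),
          hPadLow m (p+1) (by omega) le_rfl]
        have hprod : (∏ t ∈ Finset.Icc 1 p,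
            gwStep (padF (p+2) (snocEquiv (p+1) (u, m)) t)
              (padF (p+2) (snocEquiv (p+1) (u, m)) (t+1)))
            = ∏ t ∈ Finset.Icc 1 p, gwStep (padF (p+1) u t) (padF (p+1) u (t+1)) := by
          refine Finset.prod_congr rfl fun t ht => ?_
          rw [Finset.mem_Icc] at ht
          rw [hPadLow m t ht.1 (by omega), hPadLow m (t+1) (by omega) (by omega)]
        simp only [hprod]
        ring
    _ = v (padF (p+1) u i) * (∑' m, gwStep (padF (p+1) u (p+1)) m * w m)
          * μ {ω | ∀ t ∈ Finset.Icc 1 (p+1), Y t ω = padF (p+1) u t} := by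
        rw [ENNReal.tsum_mul_left]
        rw [hjoint p (padF (p+1) u)]
        ring

lemma baseC (h : ℕ → ℝ≥0∞) :
    ∫⁻ ω, h (Y 1 ω) ∂μ = ∑' m, gwStep 2 m * h m := by
  rw [show (fun ω => h (Y 1 ω))
      = fun ω => (fun f : ℕ → ℕ => h (f 1)) (fun t => Y t ω) from rfl]
  rw [ml1 μ Y hmeas 1 (fun f => h (f 1)) (fun f f' hh => by rw [hh 1 le_rfl le_rfl])]
  rw [← (Equiv.funUnique (Fin 1) ℕ).symm.tsum_eq]
  refine tsum_congr fun m => ?_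
  have hpad : padF 1 ((Equiv.funUnique (Fin 1) ℕ).symm m) 1 = m := by
    rw [padF_pos 1 _ 1 le_rfl le_rfl]
    rfl
  rw [hjoint 0 (padF 1 ((Equiv.funUnique (Fin 1) ℕ).symm m))]
  rw [Finset.Icc_eq_empty_of_lt (by omega), Finset.prod_empty, mul_one, hpad, mul_comm,
    gwFirstLaw_eq]

lemma lemA (n : ℕ) (hn : 1 ≤ n) (w : ℕ → ℝ≥0∞) :
    ∫⁻ ω, w (Y (n+1) ω) ∂μ = ∫⁻ ω, (∑' m, gwStep (Y n ω) m * w m) ∂μ := by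
  have h := stepB μ Y hmeas hjoint n n hn le_rfl (fun _ => (1:ℝ≥0∞)) w
  simpa using h

lemma intW : ∀ n, 1 ≤ n → ∀ t, ∫⁻ ω, wfun t (Y n ω) ∂μ
    = (((t+n)^2 : ℕ):ℝ≥0∞)/((((t+n+1)^2 : ℕ)):ℝ≥0∞) := by
  intro n
  induction n with
  | zero => omega
  | succ n ih =>
      intro _ t
      by_cases hn : n = 0
      · subst hn
        rw [baseC μ Y hmeas hjoint (wfun t), D2 2 t]
        unfold wfun
        rw [nat_div_pow]
      · have hn1 : 1 ≤ n := by omega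
        have h' := ih hn1 (t+1)
        rw [show t+1+n = t+(n+1) from by omega] at h'
        calc ∫⁻ ω, wfun t (Y (n+1) ω) ∂μ
            = ∫⁻ ω, (∑' m, gwStep (Y n ω) m * wfun t m) ∂μ := lemA μ Y hmeas hjoint n hn1 _
          _ = ∫⁻ ω, wfun (t+1) (Y n ω) ∂μ := lintegral_congr fun ω => by rw [D2]
          _ = _ := h'

lemma intMean : ∀ n, 1 ≤ n → ∫⁻ ω, (Y n ω : ℝ≥0∞) ∂μ = 2 := by
  intro n
  induction n with
  | zero => omega
  | succ n ih =>
      intro _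
      by_cases hn : n = 0
      · subst hn
        rw [baseC μ Y hmeas hjoint (fun m => (m:ℝ≥0∞)), D3 2]
        norm_num
      · have hn1 : 1 ≤ n := by omega
        calc ∫⁻ ω, (Y (n+1) ω : ℝ≥0∞) ∂μ
            = ∫⁻ ω, (∑' m, gwStep (Y n ω) m * (m:ℝ≥0∞)) ∂μ :=
              lemA μ Y hmeas hjoint n hn1 (fun m => (m:ℝ≥0∞))
          _ = ∫⁻ ω, (Y n ω : ℝ≥0∞) ∂μ := lintegral_congr fun ω => by rw [D3]
          _ = 2 := ih hn1

lemma intJ : ∀ n, 1 ≤ n → ∀ t, ∫⁻ ω, (Y n ω : ℝ≥0∞) * wfun t (Y n ω) ∂μ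
    = ((2*t*(t+1)*(t+n) : ℕ):ℝ≥0∞)/((((t+n+1)^3 : ℕ)):ℝ≥0∞) := by
  intro n
  induction n with
  | zero => omega
  | succ n ih =>
      intro _ t
      by_cases hn : n = 0
      · subst hn
        rw [baseC μ Y hmeas hjoint (fun m => (m:ℝ≥0∞) * wfun t m), D4 2 t]
        unfold wfun
        rw [nat_div_pow, show ((2:ℕ):ℝ≥0∞) = ((2:ℕ):ℝ≥0∞) from rfl, nat_mul_div, nat_div_mul]
        rw [show t*(2*(t+1)^2) = 2*t*(t+1)*(t+1) from by ring,
          show (t+2)*((t+1+1)^2) = (t+1+1)^3 from by ring]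
      · have hn1 : 1 ≤ n := by omega
        have h' := ih hn1 (t+1)
        rw [show t+1+n = t+(n+1) from by omega] at h'
        have hfin : ((t:ℕ):ℝ≥0∞)/((t+2:ℕ):ℝ≥0∞) ≠ ⊤ :=
          (ENNReal.div_lt_top (ENNReal.natCast_ne_top _)
            (by exact_mod_cast (by omega : (t+2:ℕ) ≠ 0))).ne
        calc ∫⁻ ω, (Y (n+1) ω : ℝ≥0∞) * wfun t (Y (n+1) ω) ∂μ
            = ∫⁻ ω, (∑' m, gwStep (Y n ω) m * ((m:ℝ≥0∞) * wfun t m)) ∂μ :=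
              lemA μ Y hmeas hjoint n hn1 (fun m => (m:ℝ≥0∞) * wfun t m)
          _ = ∫⁻ ω, (((t:ℕ):ℝ≥0∞)/((t+2:ℕ):ℝ≥0∞))
                * ((Y n ω : ℝ≥0∞) * wfun (t+1) (Y n ω)) ∂μ :=
              lintegral_congr fun ω => by rw [D4]
          _ = (((t:ℕ):ℝ≥0∞)/((t+2:ℕ):ℝ≥0∞))
                * ∫⁻ ω, (Y n ω : ℝ≥0∞) * wfun (t+1) (Y n ω) ∂μ :=
              lintegral_const_mul' _ _ hfin
          _ = (((t:ℕ):ℝ≥0∞)/((t+2:ℕ):ℝ≥0∞))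
                * (((2*(t+1)*(t+1+1)*(t+(n+1)) : ℕ):ℝ≥0∞)/((((t+(n+1)+1)^3 : ℕ)):ℝ≥0∞)) := by
              rw [h']
          _ = _ := by
              rw [nat_div_mul,
                show t*(2*(t+1)*(t+1+1)*(t+(n+1))) = (t+2)*(2*t*(t+1)*(t+(n+1))) from by ring,
                show (t+2)*((t+(n+1)+1)^3) = (t+2)*((t+(n+1)+1)^3) from rfl,
                nat_div_cancel _ _ _ (by omega : t+2 ≠ 0)]

lemma crossW (i : ℕ) (hi : 1 ≤ i) : ∀ s t,
    ∫⁻ ω, (Y i ω : ℝ≥0∞) * wfun t (Y (i+s+1) ω) ∂μ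
      = ∫⁻ ω, (Y i ω : ℝ≥0∞) * wfun (t+s+1) (Y i ω) ∂μ := by
  intro s
  induction s with
  | zero =>
      intro t
      have h1 := stepB μ Y hmeas hjoint i i hi le_rfl (fun q => (q:ℝ≥0∞)) (wfun t)
      have h2 : ∫⁻ ω, (Y i ω:ℝ≥0∞) * (∑' m, gwStep (Y i ω) m * wfun t m) ∂μ
          = ∫⁻ ω, (Y i ω:ℝ≥0∞) * wfun (t+1) (Y i ω) ∂μ :=
        lintegral_congr fun ω => by rw [D2]
      exact h1.trans h2
  | succ s ih =>
      intro t
      have h1 := stepB μ Y hmeas hjoint i (i+s+1) hi (by omega) (fun q => (q:ℝ≥0∞)) (wfun t)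
      have h2 : ∫⁻ ω, (Y i ω:ℝ≥0∞) * (∑' m, gwStep (Y (i+s+1) ω) m * wfun t m) ∂μ
          = ∫⁻ ω, (Y i ω:ℝ≥0∞) * wfun (t+1) (Y (i+s+1) ω) ∂μ :=
        lintegral_congr fun ω => by rw [D2]
      have h3 := ih (t+1)
      rw [show t+1+s+1 = t+(s+1)+1 from by omega] at h3
      exact (h1.trans h2).trans h3

lemma crossZ (j : ℕ) (hj : 1 ≤ j) : ∀ s,
    ∫⁻ ω, wfun 0 (Y j ω) * (Y (j+s+1) ω : ℝ≥0∞) ∂μ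
      = ∫⁻ ω, wfun 0 (Y j ω) * (Y j ω : ℝ≥0∞) ∂μ := by
  intro s
  induction s with
  | zero =>
      have h1 := stepB μ Y hmeas hjoint j j hj le_rfl (wfun 0) (fun q => (q:ℝ≥0∞))
      have h2 : ∫⁻ ω, wfun 0 (Y j ω) * (∑' m, gwStep (Y j ω) m * (m:ℝ≥0∞)) ∂μ
          = ∫⁻ ω, wfun 0 (Y j ω) * (Y j ω : ℝ≥0∞) ∂μ :=
        lintegral_congr fun ω => by rw [D3]
      exact h1.trans h2
  | succ s ih =>
      have h1 := stepB μ Y hmeas hjoint j (j+s+1) hj (by omega) (wfun 0) (fun q => (q:ℝ≥0∞))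
      have h2 : ∫⁻ ω, wfun 0 (Y j ω) * (∑' m, gwStep (Y (j+s+1) ω) m * (m:ℝ≥0∞)) ∂μ
          = ∫⁻ ω, wfun 0 (Y j ω) * (Y (j+s+1) ω : ℝ≥0∞) ∂μ :=
        lintegral_congr fun ω => by rw [D3]
      exact (h1.trans h2).trans ih

lemma zeroInt (j : ℕ) :
    ∫⁻ ω, wfun 0 (Y j ω) * (Y j ω : ℝ≥0∞) ∂μ = 0 := by
  have h : ∀ ω, wfun 0 (Y j ω) * (Y j ω : ℝ≥0∞) = 0 := by
    intro ω
    cases h' : Y j ω with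
    | zero => simp [h']
    | succ q => simp [h', wfun]
  rw [lintegral_congr h, lintegral_zero]

lemma Bval (i j : ℕ) (hi : 1 ≤ i) (hj : 1 ≤ j) :
    ∫⁻ ω, (Y i ω : ℝ≥0∞) * wfun 0 (Y j ω) ∂μ
      = ((2*(j-i)*(j-i+1)*j : ℕ):ℝ≥0∞)/((((j+1)^3 : ℕ)):ℝ≥0∞) := by
  rcases lt_trichotomy i j with h|h|h
  · obtain ⟨d, rfl⟩ : ∃ d, j = i+d+1 := ⟨j-i-1, by omega⟩
    rw [crossW μ Y hmeas hjoint i hi d 0]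
    rw [show (0:ℕ)+d+1 = d+1 from by omega]
    rw [intJ μ Y hmeas hjoint i hi (d+1)]
    rw [show (2*((i+d+1)-i)*((i+d+1)-i+1)*(i+d+1) : ℕ)
        = 2*(d+1)*((d+1)+1)*((d+1)+i) from by
      rw [show (i+d+1)-i = d+1 from by omega]; ring]
    rw [show ((i+d+1)+1 : ℕ)^3 = ((d+1)+i+1)^3 from by ring]
  · subst h
    have hz : ∀ ω, (Y i ω : ℝ≥0∞) * wfun 0 (Y i ω) = 0 := by
      intro ω
      cases h' : Y i ω with
      | zero => simp [h']
      | succ q => simp [h', wfun]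
    rw [lintegral_congr hz, lintegral_zero]
    rw [show (2*(i-i)*(i-i+1)*i : ℕ) = 0 from by simp [Nat.sub_self]]
    simp
  · obtain ⟨s, rfl⟩ : ∃ s, i = j+s+1 := ⟨i-j-1, by omega⟩
    have hcomm : ∫⁻ ω, (Y (j+s+1) ω : ℝ≥0∞) * wfun 0 (Y j ω) ∂μ
        = ∫⁻ ω, wfun 0 (Y j ω) * (Y (j+s+1) ω : ℝ≥0∞) ∂μ :=
      lintegral_congr fun ω => mul_comm _ _
    rw [hcomm, crossZ μ Y hmeas hjoint j hj s, zeroInt μ Y hmeas hjoint j]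
    rw [show (2*(j-(j+s+1))*(j-(j+s+1)+1)*j : ℕ) = 0 from by
      rw [show j-(j+s+1) = 0 from by omega]; ring]
    simp

end Core

/-- Let `(Y_n)` be the modified Galton–Watson process with `Y_0 = 1`, first-generation
law `P(Y_1 = i) = (i+1) 2^{-i-2}` and subsequent generations branching with the
critical geometric offspring law `π_i = 2^{-i-1}` (encoded by the finite-dimensional
distributions below).  Then for all `i, j ≥ 1`,
`E(Y_i | Y_j = 0) ≤ 2` and `E(Y_i | Y_j > 0) ≤ 4i + 4`. -/
theorem conditional_mean_modified_GW
    {Ω : Type*} [MeasurableSpace Ω] (μ : Measure Ω) [IsProbabilityMeasure μ]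
    (Y : ℕ → Ω → ℕ)
    (hmeas : ∀ n, Measurable (Y n))
    (hY0 : ∀ ω, Y 0 ω = 1)
    (hjoint : ∀ n : ℕ, ∀ k : ℕ → ℕ,
      μ {ω | ∀ t ∈ Finset.Icc 1 (n + 1), Y t ω = k t} =
        gwFirstLaw (k 1) * ∏ t ∈ Finset.Icc 1 n, gwStep (k t) (k (t + 1)))
    (i j : ℕ) (hi : 1 ≤ i) (hj : 1 ≤ j) :
    (∫⁻ ω, (Y i ω : ℝ≥0∞) ∂(μ[|{ω | Y j ω = 0}])) ≤ 2 ∧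
    (∫⁻ ω, (Y i ω : ℝ≥0∞) ∂(μ[|{ω | 0 < Y j ω}])) ≤ 4 * i + 4 := by
  classical
  have hsm : MeasurableSet {ω | Y j ω = 0} := (hmeas j) (measurableSet_singleton 0)
  set s : Set Ω := {ω | Y j ω = 0} with hs_def
  have hμs : μ s = ((j^2 : ℕ):ℝ≥0∞)/(((j+1)^2 : ℕ):ℝ≥0∞) := by
    have hind : ∀ ω, s.indicator (1 : Ω → ℝ≥0∞) ω = wfun 0 (Y j ω) := by
      intro ω
      by_cases h : Y j ω = 0
      · rw [Set.indicator_of_mem (show ω ∈ s from h), h]; simp [wfun]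
      · rw [Set.indicator_of_notMem (show ω ∉ s from h)]
        obtain ⟨q, hq⟩ := Nat.exists_eq_succ_of_ne_zero h
        rw [hq]; simp [wfun]
    calc μ s = ∫⁻ ω, s.indicator 1 ω ∂μ := (lintegral_indicator_one hsm).symm
      _ = ∫⁻ ω, wfun 0 (Y j ω) ∂μ := lintegral_congr hind
      _ = (((0+j)^2:ℕ):ℝ≥0∞)/((((0+j+1)^2:ℕ)):ℝ≥0∞) := intW μ Y hmeas hjoint j hj 0
      _ = _ := by rw [show (0+j:ℕ) = j from by omega]
  have hres : ∫⁻ ω in s, (Y i ω : ℝ≥0∞) ∂μ = ∫⁻ ω, (Y i ω:ℝ≥0∞) * wfun 0 (Y j ω) ∂μ := by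
    rw [← lintegral_indicator hsm]
    refine lintegral_congr fun ω => ?_
    by_cases h : Y j ω = 0
    · rw [Set.indicator_of_mem (show ω ∈ s from h), h]; simp [wfun]
    · rw [Set.indicator_of_notMem (show ω ∉ s from h)]
      obtain ⟨q, hq⟩ := Nat.exists_eq_succ_of_ne_zero h
      rw [hq]; simp [wfun]
  have hBv : ∫⁻ ω in s, (Y i ω : ℝ≥0∞) ∂μ
      = ((2*(j-i)*(j-i+1)*j : ℕ):ℝ≥0∞)/((((j+1)^3 : ℕ)):ℝ≥0∞) := by
    rw [hres]; exact Bval μ Y hmeas hjoint i j hi hj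
  have hμs_ne0 : μ s ≠ 0 := by
    intro hc
    rw [hμs, ENNReal.div_eq_zero_iff] at hc
    rcases hc with hc | hc
    · exact (by positivity : ((j^2:ℕ):ℕ) ≠ 0) (by exact_mod_cast hc)
    · exact ENNReal.natCast_ne_top _ hc
  have hμs_fin : μ s ≠ ⊤ := measure_ne_top μ s
  constructor
  · have hcond : μ[|s] = (μ s)⁻¹ • μ.restrict s := rfl
    rw [hcond, lintegral_smul_measure]
    have hle : ∫⁻ ω in s, (Y i ω:ℝ≥0∞) ∂μ ≤ 2 * μ s := by
      rw [hBv, hμs]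
      rw [show (2:ℝ≥0∞) = ((2:ℕ):ℝ≥0∞) from by norm_num, nat_mul_div]
      rw [← nat_div_cancel (2*j^2) ((j+1)^2) (j+1) (by omega),
        show ((j+1)*((j+1)^2) : ℕ) = (j+1)^3 from by ring]
      refine ENNReal.div_le_div_right (Nat.cast_le.mpr ?_) _
      calc 2*(j-i)*(j-i+1)*j ≤ 2*j*(j+1)*j := by
            gcongr <;> omega
        _ = (j+1)*(2*j^2) := by ring
    calc (μ s)⁻¹ * ∫⁻ ω in s, (Y i ω:ℝ≥0∞) ∂μ
        ≤ (μ s)⁻¹ * (2 * μ s) := mul_le_mul_right hle _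
      _ = 2 * ((μ s)⁻¹ * μ s) := by ring
      _ = 2 := by rw [ENNReal.inv_mul_cancel hμs_ne0 hμs_fin, mul_one]
  · have hsc : {ω | 0 < Y j ω} = sᶜ := by
      ext ω
      simp [hs_def, Nat.pos_iff_ne_zero]
    rw [hsc]
    have hμsc_fin : μ sᶜ ≠ ⊤ := measure_ne_top μ _
    have hden2 : (((j+1)^2:ℕ):ℝ≥0∞) ≠ 0 := by
      exact_mod_cast (by positivity : ((j+1)^2:ℕ) ≠ 0)
    have hden3 : (((j+1)^3:ℕ):ℝ≥0∞) ≠ 0 := by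
      exact_mod_cast (by positivity : ((j+1)^3:ℕ) ≠ 0)
    have hμsc : μ sᶜ = ((2*j+1 : ℕ):ℝ≥0∞)/(((j+1)^2 : ℕ):ℝ≥0∞) := by
      have h1 := prob_add_prob_compl (μ := μ) hsm
      rw [hμs] at h1
      have h2 : ((j^2:ℕ):ℝ≥0∞)/(((j+1)^2 : ℕ):ℝ≥0∞)
          + ((2*j+1 : ℕ):ℝ≥0∞)/(((j+1)^2 : ℕ):ℝ≥0∞) = 1 := by
        rw [ENNReal.div_add_div_same,
          show ((j^2:ℕ):ℝ≥0∞) + ((2*j+1:ℕ):ℝ≥0∞) = (((j+1)^2:ℕ):ℝ≥0∞) from by push_cast; ring,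
          ENNReal.div_self hden2 (ENNReal.natCast_ne_top _)]
      rw [← h2] at h1
      exact (ENNReal.add_right_inj
        (ENNReal.div_lt_top (ENNReal.natCast_ne_top _) hden2).ne).mp h1
    have hμsc_ne0 : μ sᶜ ≠ 0 := by
      intro hc
      rw [hμsc, ENNReal.div_eq_zero_iff] at hc
      rcases hc with hc | hc
      · exact (by omega : (2*j+1:ℕ) ≠ 0) (by exact_mod_cast hc)
      · exact ENNReal.natCast_ne_top _ hc
    have hcond : μ[|sᶜ] = (μ sᶜ)⁻¹ • μ.restrict sᶜ := rfl
    rw [hcond, lintegral_smul_measure]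
    have hBfin : ∫⁻ ω in s, (Y i ω:ℝ≥0∞) ∂μ ≠ ⊤ := by
      rw [hBv]
      exact (ENNReal.div_lt_top (ENNReal.natCast_ne_top _) hden3).ne
    have hsum : ∫⁻ ω in sᶜ, (Y i ω:ℝ≥0∞) ∂μ + ∫⁻ ω in s, (Y i ω:ℝ≥0∞) ∂μ = 2 := by
      rw [add_comm, lintegral_add_compl _ hsm, intMean μ Y hmeas hjoint i hi]
    have hkey : ∫⁻ ω in sᶜ, (Y i ω:ℝ≥0∞) ∂μ ≤ ((4*i+4:ℕ):ℝ≥0∞) * μ sᶜ := by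
      refine (ENNReal.add_le_add_iff_right hBfin).mp ?_
      rw [hsum, hBv, hμsc, nat_mul_div,
        ← nat_div_cancel ((4*i+4)*(2*j+1)) ((j+1)^2) (j+1) (by omega),
        show ((j+1)*((j+1)^2) : ℕ) = (j+1)^3 from by ring,
        ENNReal.div_add_div_same,
        show (((j+1)*((4*i+4)*(2*j+1)):ℕ):ℝ≥0∞) + ((2*(j-i)*(j-i+1)*j : ℕ):ℝ≥0∞)
          = (((j+1)*((4*i+4)*(2*j+1)) + 2*(j-i)*(j-i+1)*j : ℕ):ℝ≥0∞) from by push_cast; ring]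
      have h2' : (2:ℝ≥0∞) = ((2*(j+1)^3 : ℕ):ℝ≥0∞)/((((j+1)^3:ℕ)):ℝ≥0∞) := by
        rw [← nat_mul_div, ENNReal.div_self hden3 (ENNReal.natCast_ne_top _), mul_one]
        norm_num
      rw [h2']
      refine ENNReal.div_le_div_right (Nat.cast_le.mpr ?_) _
      rcases le_or_gt j i with hji | hij
      · obtain ⟨e, hie⟩ : ∃ e, i = j + e := ⟨i - j, by omega⟩
        rw [show j - i = 0 from by omega, hie,
          show (j+1)*((4*(j+e)+4)*(2*j+1)) + 2*0*(0+1)*j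
            = 2*(j+1)^3 + (2*(j+1)^2*(3*j+1) + 4*e*(j+1)*(2*j+1)) from by ring]
        exact Nat.le_add_right _ _
      · obtain ⟨d, hjd⟩ : ∃ d, j = i + d := ⟨j - i, by omega⟩
        rw [show j - i = d from by omega, hjd,
          show ((i+d)+1)*((4*i+4)*(2*(i+d)+1)) + 2*d*(d+1)*(i+d)
            = 2*((i+d)+1)^3 + (2 + 6*d + 4*d^2 + 10*i + 18*i*d + 4*i*d^2
              + 14*i^2 + 10*i^2*d + 6*i^3) from by ring]
        exact Nat.le_add_right _ _
    calc (μ sᶜ)⁻¹ * ∫⁻ ω in sᶜ, (Y i ω:ℝ≥0∞) ∂μ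
        ≤ (μ sᶜ)⁻¹ * (((4*i+4:ℕ):ℝ≥0∞) * μ sᶜ) := mul_le_mul_right hkey _
      _ = ((4*i+4:ℕ):ℝ≥0∞) * ((μ sᶜ)⁻¹ * μ sᶜ) := by ring
      _ = ((4*i+4:ℕ):ℝ≥0∞) := by rw [ENNReal.inv_mul_cancel hμsc_ne0 hμsc_fin, mul_one]
      _ = 4 * (i:ℝ≥0∞) + 4 := by push_cast; ring
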